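/- Let q be a prime power and G a simple graph on vertex set {1,…,ℓ}, and let e = {i₁,i₂} be an edge of G. Let G∖e be the graph obtained by deleting the edge e, and let G/e be the simple graph on {1,…,ℓ}∖{i₂} whose edges are the sets σ(f) of cardinality 2, for f an edge of G, where σ fixes every point except that it sends i₂ to i₁. Then for every integer t, χ(S_G^q, t) = χ(S_{G∖e}^q, t) − (q−1)·χ(S_{G/e}^q, t). -/

import Mathlib

open Finset
open scoped Classical

/-- The characteristic polynomial of a finite set of (hyper)planes, evaluated at an
integer `t`:  `χ(A,t) = Σ_{I ⊆ A} (−1)^{|I|} t^{dim ∩_{H ∈ I} H}`, the empty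
intersection being the whole space. -/
noncomputable def chi {K V : Type} [Field K] [Fintype V]
    (A : Finset (Submodule K (V → K))) (t : ℤ) : ℤ :=
  ∑ I ∈ A.powerset, (-1) ^ I.card * t ^ (Module.finrank K ↥(I.inf id))
/-- The arrangement `S_G^q`: the coordinate hyperplanes `{x_i = 0}` together with the
hyperplanes `{x_i − c x_j = 0}` for every edge `{i,j}` of `G` and every `c ≠ 0`. -/
noncomputable def graphArr (K : Type) [Field K] [Fintype K] {V : Type} [Fintype V]
    (G : SimpleGraph V) : Finset (Submodule K (V → K)) :=
  (Finset.univ.image fun i : V =>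
      LinearMap.ker (LinearMap.proj i : (V → K) →ₗ[K] K)) ∪
  (((Finset.univ : Finset (V × V × K)).filter
      (fun p => G.Adj p.1 p.2.1 ∧ p.2.2 ≠ 0)).image
    (fun p => LinearMap.ker
      ((LinearMap.proj p.1 : (V → K) →ₗ[K] K) - p.2.2 • LinearMap.proj p.2.1)))

set_option linter.unusedSectionVars false
set_option maxHeartbeats 1000000

section aux


variable {α L : Type} [DecidableEq α] [SemilatticeInf L] [OrderTop L]

/-- Pairing with a fixed element `H₀` whose value is above `a` kills the alternating sum. -/
lemma sum_pow_inf_zero (g : L → ℤ) (r : α → L) (B : Finset α) (a : L)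
    (H₀ : α) (h₀ : H₀ ∈ B) (ha : a ⊓ r H₀ = a) :
    ∑ I ∈ B.powerset, (-1) ^ I.card * g (a ⊓ I.inf r) = 0 := by
  rw [← Finset.insert_erase h₀,
    Finset.sum_powerset_insert (Finset.notMem_erase _ _)]
  rw [← Finset.sum_add_distrib] at *
  · exact Finset.sum_eq_zero (fun I hI => by
      have hH : H₀ ∉ I := fun h => Finset.notMem_erase H₀ B
        ((Finset.mem_powerset.1 hI) h)
      rw [Finset.card_insert_of_notMem hH, Finset.inf_insert, ← inf_assoc, ha,
        pow_succ]
      ring)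

/-- Whitney collapse: an alternating sum over subsets of `B` of a function of the
inf of the `r`-images only depends on the image finset. -/
lemma whitney_collapse [DecidableEq L] (g : L → ℤ) (r : α → L) (B : Finset α) :
    ∑ I ∈ B.powerset, (-1) ^ I.card * g (I.inf r)
      = ∑ S ∈ (B.image r).powerset, (-1) ^ S.card * g (S.inf id) := by
  induction B using Finset.strongInduction with
  | _ B ih =>
    by_cases hinj : Set.InjOn r B
    · refine Finset.sum_bij (fun I _ => I.image r) ?_ ?_ ?_ ?_
      · intro I hI
        exact Finset.mem_powerset.2
          (Finset.image_subset_image (Finset.mem_powerset.1 hI))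
      · intro I₁ h₁ I₂ h₂ h
        have h₁' := Finset.mem_powerset.1 h₁
        have h₂' := Finset.mem_powerset.1 h₂
        ext x
        constructor
        · intro hx
          have hx2 : r x ∈ I₂.image r := by
            rw [show I₂.image r = I₁.image r from h.symm]
            exact Finset.mem_image_of_mem r hx
          obtain ⟨y, hy, hyx⟩ := Finset.mem_image.1 hx2
          rwa [← hinj (h₂' hy) (h₁' hx) hyx]
        · intro hx
          have hx2 : r x ∈ I₁.image r := by
            rw [show I₁.image r = I₂.image r from h]
            exact Finset.mem_image_of_mem r hx
          obtain ⟨y, hy, hyx⟩ := Finset.mem_image.1 hx2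
          rwa [← hinj (h₁' hy) (h₂' hx) hyx]
      · intro S hS
        refine ⟨B.filter (fun H => r H ∈ S), Finset.mem_powerset.2 (Finset.filter_subset _ _), ?_⟩
        ext w
        simp only [Finset.mem_image, Finset.mem_filter]
        constructor
        · rintro ⟨H, ⟨hHB, hrH⟩, rfl⟩; exact hrH
        · intro hw
          obtain ⟨H, hHB, rfl⟩ := Finset.mem_image.1 (Finset.mem_powerset.1 hS hw)
          exact ⟨H, ⟨hHB, hw⟩, rfl⟩
      · intro I hI
        rw [Finset.card_image_of_injOn (hinj.mono (Finset.mem_powerset.1 hI)),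
          Finset.inf_image]
        rfl
    · simp only [Set.InjOn, not_forall] at hinj
      obtain ⟨H₁, h₁, H₂, h₂, hr, hne⟩ := hinj
      have h₁B : H₁ ∈ B := h₁
      have h₂B : H₂ ∈ B := h₂
      -- reduce to B.erase H₂
      have himg : (B.erase H₂).image r = B.image r := by
        apply Finset.Subset.antisymm (Finset.image_subset_image (Finset.erase_subset _ _))
        intro w hw
        obtain ⟨H, hH, rfl⟩ := Finset.mem_image.1 hw
        by_cases hH2 : H = H₂
        · exact Finset.mem_image.2 ⟨H₁, Finset.mem_erase.2 ⟨hne, h₁B⟩, by rw [hr, hH2]⟩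
        · exact Finset.mem_image.2 ⟨H, Finset.mem_erase.2 ⟨hH2, hH⟩, rfl⟩
      have hsum : ∑ I ∈ B.powerset, (-1) ^ I.card * g (I.inf r)
          = ∑ I ∈ (B.erase H₂).powerset, (-1) ^ I.card * g (I.inf r) := by
        have hkey := Finset.sum_powerset_insert (Finset.notMem_erase H₂ B)
          (f := fun I => (-1 : ℤ) ^ I.card * g (I.inf r))
        rw [Finset.insert_erase h₂B] at hkey
        rw [hkey]
        have hzero : ∑ I ∈ (B.erase H₂).powerset,
            (-1) ^ (insert H₂ I).card * g ((insert H₂ I).inf r) = 0 := by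
          have h₁e : H₁ ∈ B.erase H₂ := Finset.mem_erase.2 ⟨hne, h₁B⟩
          rw [← Finset.insert_erase h₁e,
            Finset.sum_powerset_insert (Finset.notMem_erase _ _),
            ← Finset.sum_add_distrib]
          refine Finset.sum_eq_zero (fun I hI => ?_)
          have hI' := Finset.mem_powerset.1 hI
          have h1I : H₁ ∉ I := fun h => Finset.notMem_erase H₁ _ (hI' h)
          have h2I : H₂ ∉ I := fun h =>
            Finset.notMem_erase H₂ B (Finset.erase_subset _ _ (hI' h))
          have h21 : H₂ ∉ insert H₁ I := by
            simp only [Finset.mem_insert]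
            rintro (h | h); exact hne h.symm; exact h2I h
          rw [Finset.card_insert_of_notMem h2I, Finset.card_insert_of_notMem h21,
            Finset.card_insert_of_notMem h1I, Finset.inf_insert, Finset.inf_insert,
            Finset.inf_insert, ← inf_assoc, ← hr, inf_idem]
          ring
        rw [hzero, add_zero]
      rw [hsum, ← himg]
      exact ih _ (Finset.erase_ssubset h₂B)

/-- Splitting an alternating powerset sum over a disjoint union. -/
lemma sum_powerset_union_disj {M : Type} [AddCommMonoid M] {s t : Finset α}
    (hst : Disjoint s t) (f : Finset α → M) :
    ∑ u ∈ (s ∪ t).powerset, f u = ∑ v ∈ s.powerset, ∑ w ∈ t.powerset, f (v ∪ w) := by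
  induction t using Finset.induction generalizing f with
  | empty => simp
  | @insert a t' ha iht =>
    have hst' : Disjoint s t' := hst.mono_right (Finset.subset_insert _ _)
    have hau : a ∉ s ∪ t' := by
      simp only [Finset.mem_union, not_or]
      exact ⟨Finset.disjoint_right.1 hst (Finset.mem_insert_self a t'), ha⟩
    rw [Finset.union_insert, Finset.sum_powerset_insert hau, iht hst' f,
      iht hst' (fun u => f (insert a u))]
    rw [← Finset.sum_add_distrib]
    refine Finset.sum_congr rfl (fun v hv => ?_)
    rw [Finset.sum_powerset_insert ha]
    simp only [← Finset.union_insert]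

end aux

section linaux


variable {F : Type} [Field F]

lemma ker_ne_of_witness {M : Type} [AddCommGroup M] [Module F M]
    {f g : M →ₗ[F] F} (x : M) (hf : f x ≠ 0) (hg : g x = 0) :
    LinearMap.ker f ≠ LinearMap.ker g := by
  intro h
  exact hf (by
    have : x ∈ LinearMap.ker g := LinearMap.mem_ker.2 hg
    rw [← h] at this
    exact LinearMap.mem_ker.1 this)

lemma comap_finset_inf {M N : Type} [AddCommGroup M] [Module F M]
    [AddCommGroup N] [Module F N] (f : N →ₗ[F] M) (I : Finset (Submodule F M)) :
    Submodule.comap f (I.inf id) = I.inf (fun W => Submodule.comap f W) := by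
  classical
  induction I using Finset.induction with
  | empty => simp [Submodule.comap_top]
  | @insert a s ha ih => simp [Finset.inf_insert, Submodule.comap_inf, ih]

lemma finrank_comap_eq {M N : Type} [AddCommGroup M] [Module F M]
    [AddCommGroup N] [Module F N] (f : N →ₗ[F] M) (hf : Function.Injective f)
    (W : Submodule F M) :
    Module.finrank F (Submodule.comap f W) = Module.finrank F ↥(W ⊓ LinearMap.range f) := by
  rw [show W ⊓ LinearMap.range f = LinearMap.range f ⊓ W from inf_comm _ _,
    ← Submodule.map_comap_eq]
  exact (Submodule.equivMapOfInjective f hf _).finrank_eq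

end linaux

section jsec

variable {ℓ : ℕ} (F : Type) [Field F] {i₁ i₂ : Fin ℓ} (hne : i₁ ≠ i₂)

/-- Embedding of `F^{V'}` onto the hyperplane `x_{i₁} = c x_{i₂}`. -/
noncomputable def jmap (c : F) :
    ({i : Fin ℓ // i ≠ i₂} → F) →ₗ[F] (Fin ℓ → F) where
  toFun y i := if h : i = i₂ then c⁻¹ * y ⟨i₁, hne⟩ else y ⟨i, h⟩
  map_add' y z := by
    ext i
    by_cases h : i = i₂ <;> simp [h, mul_add]
  map_smul' a y := by
    ext i
    by_cases h : i = i₂ <;> simp [h] <;> ring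

@[simp] lemma jmap_apply (c : F) (y : {i : Fin ℓ // i ≠ i₂} → F) (i : Fin ℓ) :
    jmap F hne c y i = if h : i = i₂ then c⁻¹ * y ⟨i₁, hne⟩ else y ⟨i, h⟩ := rfl

lemma jmap_injective (c : F) : Function.Injective (jmap F hne c) := by
  intro y z h
  ext i
  have := congrFun h (i : Fin ℓ)
  simpa [jmap, i.2] using this

lemma proj_comp_jmap (c : F) (j : Fin ℓ) (hj : j ≠ i₂) :
    (LinearMap.proj j : (Fin ℓ → F) →ₗ[F] F).comp (jmap F hne c)
      = LinearMap.proj (⟨j, hj⟩ : {i : Fin ℓ // i ≠ i₂}) := by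
  ext y
  simp [jmap, hj]

lemma proj_comp_jmap₂ (c : F) :
    (LinearMap.proj i₂ : (Fin ℓ → F) →ₗ[F] F).comp (jmap F hne c)
      = c⁻¹ • LinearMap.proj (⟨i₁, hne⟩ : {i : Fin ℓ // i ≠ i₂}) := by
  ext y
  simp [jmap]

lemma range_jmap (c : F) (hc : c ≠ 0) :
    LinearMap.range (jmap F hne c)
      = LinearMap.ker ((LinearMap.proj i₁ : (Fin ℓ → F) →ₗ[F] F)
          - c • LinearMap.proj i₂) := by
  ext x
  simp only [LinearMap.mem_range, LinearMap.mem_ker, LinearMap.sub_apply,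
    LinearMap.smul_apply, LinearMap.proj_apply, smul_eq_mul, sub_eq_zero]
  constructor
  · rintro ⟨y, rfl⟩
    simp [jmap, hne, hc]
  · intro h
    refine ⟨fun i => x i, ?_⟩
    ext i
    by_cases hi : i = i₂
    · subst hi
      simp only [jmap, LinearMap.coe_mk, AddHom.coe_mk, dif_pos]
      field_simp
      rw [h]
    · simp [jmap, hi]


noncomputable def HcDef {ℓ : ℕ} (F : Type) [Field F] (i₁ i₂ : Fin ℓ) (c : F) :
    Submodule F (Fin ℓ → F) :=
  LinearMap.ker ((LinearMap.proj i₁ : (Fin ℓ → F) →ₗ[F] F) - c • LinearMap.proj i₂)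

noncomputable def KDef {ℓ : ℕ} (F : Type) [Field F] (i₁ i₂ : Fin ℓ) :
    Submodule F (Fin ℓ → F) :=
  LinearMap.ker (LinearMap.proj i₁ : (Fin ℓ → F) →ₗ[F] F)
    ⊓ LinearMap.ker (LinearMap.proj i₂ : (Fin ℓ → F) →ₗ[F] F)

section csum

variable {ℓ : ℕ} {F : Type} [Field F] [Fintype F] {i₁ i₂ : Fin ℓ}

lemma Hc_inj (hne : i₁ ≠ i₂) {c c' : F} (h : HcDef F i₁ i₂ c = HcDef F i₁ i₂ c') :
    c = c' := by
  have hx : (Pi.single i₁ c + Pi.single i₂ 1 : Fin ℓ → F) ∈ HcDef F i₁ i₂ c := by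
    simp [HcDef, LinearMap.mem_ker, Pi.single_apply, hne, hne.symm]
  rw [h] at hx
  simpa [HcDef, LinearMap.mem_ker, Pi.single_apply, hne, hne.symm, sub_eq_zero] using hx

lemma K_le_Hc (c : F) : KDef F i₁ i₂ ≤ HcDef F i₁ i₂ c := by
  intro x hx
  obtain ⟨h1, h2⟩ := Submodule.mem_inf.1 hx
  simp only [LinearMap.mem_ker, LinearMap.proj_apply] at h1 h2
  simp [HcDef, LinearMap.mem_ker, h1, h2]

lemma Hc_inf_Hc {c c' : F} (hcc : c ≠ c') :
    HcDef F i₁ i₂ c ⊓ HcDef F i₁ i₂ c' ≤ KDef F i₁ i₂ := by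
  intro x hx
  obtain ⟨h1, h2⟩ := Submodule.mem_inf.1 hx
  simp only [HcDef, LinearMap.mem_ker, LinearMap.sub_apply, LinearMap.smul_apply,
    LinearMap.proj_apply, smul_eq_mul, sub_eq_zero] at h1 h2
  have h2' : x i₂ = 0 := by
    by_contra hx2
    exact hcc (mul_right_cancel₀ hx2 (h1.symm.trans h2))
  refine Submodule.mem_inf.2 ⟨?_, ?_⟩ <;>
    simp [LinearMap.mem_ker, h2', h1, h2]

lemma csum {q : ℕ} (hq : Fintype.card F = q) (hne : i₁ ≠ i₂)
    (u : Submodule F (Fin ℓ → F) → ℤ) :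
    ∑ J ∈ (((univ : Finset F).filter (fun c => c ≠ 0)).image (HcDef F i₁ i₂)).powerset,
        (-1 : ℤ) ^ J.card * u (J.inf id)
      = u ⊤ - (∑ c ∈ (univ : Finset F).filter (fun c => c ≠ 0), u (HcDef F i₁ i₂ c))
        + ((q : ℤ) - 2) * u (KDef F i₁ i₂) := by
  classical
  set Fx : Finset F := (univ : Finset F).filter (fun c => c ≠ 0) with hFx
  set Cs : Finset (Submodule F (Fin ℓ → F)) := Fx.image (HcDef F i₁ i₂) with hCs
  have hInjOn : Set.InjOn (HcDef F i₁ i₂) Fx := fun a _ b _ h => Hc_inj hne h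
  have hKle : ∀ W ∈ Cs, KDef F i₁ i₂ ≤ W := by
    intro W hW
    obtain ⟨c, _, rfl⟩ := Finset.mem_image.1 hW
    exact K_le_Hc c
  -- pointwise identity
  have hpt : ∀ J ∈ Cs.powerset,
      (-1 : ℤ) ^ J.card * u (J.inf id)
        = (-1) ^ J.card * u (KDef F i₁ i₂)
          + (if J = ∅ then u ⊤ - u (KDef F i₁ i₂) else 0)
          + ∑ W ∈ Cs, (if J = {W} then u (KDef F i₁ i₂) - u W else 0) := by
    intro J hJ
    have hJC : J ⊆ Cs := Finset.mem_powerset.1 hJ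
    rcases Nat.lt_or_ge J.card 2 with h2 | h2
    · interval_cases h : J.card
      · -- J = ∅
        have hJe : J = ∅ := Finset.card_eq_zero.1 h
        subst hJe
        have : ∀ W ∈ Cs, (if (∅ : Finset (Submodule F (Fin ℓ → F))) = {W}
            then u (KDef F i₁ i₂) - u W else 0) = 0 := by
          intro W _
          exact if_neg fun hh => (Finset.singleton_ne_empty W) hh.symm
        rw [Finset.sum_congr rfl this]
        simp
      · -- J = {W₀}
        obtain ⟨W₀, rfl⟩ := Finset.card_eq_one.1 h
        have hW₀ : W₀ ∈ Cs := hJC (Finset.mem_singleton_self W₀)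
        have hsum : ∑ W ∈ Cs, (if ({W₀} : Finset (Submodule F (Fin ℓ → F))) = {W}
            then u (KDef F i₁ i₂) - u W else 0) = u (KDef F i₁ i₂) - u W₀ := by
          rw [Finset.sum_eq_single W₀]
          · simp
          · intro W hW hWne
            rw [if_neg]
            intro hc
            exact hWne (Finset.singleton_injective hc).symm
          · intro h; exact absurd hW₀ h
        rw [hsum]
        simp only [Finset.card_singleton, pow_one, Finset.inf_singleton, id_eq,
          if_neg (Finset.singleton_ne_empty W₀)]
        ring
    · -- |J| ≥ 2 : inf J = K
      have hKJ : J.inf id = KDef F i₁ i₂ := by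
        obtain ⟨W₁, hW₁, W₂, hW₂, hWne⟩ := Finset.one_lt_card.1 h2
        obtain ⟨c₁, _, rfl⟩ := Finset.mem_image.1 (hJC hW₁)
        obtain ⟨c₂, _, rfl⟩ := Finset.mem_image.1 (hJC hW₂)
        have hcc : c₁ ≠ c₂ := fun h => hWne (by rw [h])
        refine le_antisymm ?_ (Finset.le_inf (fun W hW => hKle W (hJC hW)))
        exact le_trans (le_inf (Finset.inf_le hW₁) (Finset.inf_le hW₂)) (Hc_inf_Hc hcc)
      have hJne : J ≠ ∅ := by
        intro h; rw [h] at h2; simp at h2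
      have hJns : ∀ W, J ≠ {W} := by
        intro W h; rw [h] at h2; simp at h2
      rw [hKJ, if_neg hJne, Finset.sum_congr rfl (fun W _ => if_neg (hJns W))]
      simp
  rw [Finset.sum_congr rfl hpt]
  rw [Finset.sum_add_distrib, Finset.sum_add_distrib]
  have hCs_ne : Cs ≠ ∅ := by
    have : (1 : F) ∈ Fx := by simp [hFx]
    exact Finset.nonempty_iff_ne_empty.1 ⟨HcDef F i₁ i₂ 1, Finset.mem_image_of_mem _ this⟩
  have e1 : ∑ J ∈ Cs.powerset, (-1 : ℤ) ^ J.card * u (KDef F i₁ i₂) = 0 := by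
    rw [← Finset.sum_mul, Finset.sum_powerset_neg_one_pow_card, if_neg hCs_ne, zero_mul]
  have e2 : ∑ J ∈ Cs.powerset, (if J = ∅ then u ⊤ - u (KDef F i₁ i₂) else 0)
      = u ⊤ - u (KDef F i₁ i₂) := by
    rw [Finset.sum_ite_eq' Cs.powerset ∅ (fun _ => u ⊤ - u (KDef F i₁ i₂)),
      if_pos (Finset.empty_mem_powerset Cs)]
  have e3 : ∑ J ∈ Cs.powerset, ∑ W ∈ Cs, (if J = {W} then u (KDef F i₁ i₂) - u W else 0)
      = (Cs.card : ℤ) * u (KDef F i₁ i₂) - ∑ W ∈ Cs, u W := by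
    rw [Finset.sum_comm]
    have : ∀ W ∈ Cs, ∑ J ∈ Cs.powerset, (if J = {W} then u (KDef F i₁ i₂) - u W else 0)
        = u (KDef F i₁ i₂) - u W := by
      intro W hW
      rw [Finset.sum_ite_eq' Cs.powerset {W} (fun _ => u (KDef F i₁ i₂) - u W),
        if_pos (Finset.mem_powerset.2 (Finset.singleton_subset_iff.2 hW))]
    rw [Finset.sum_congr rfl this, Finset.sum_sub_distrib, Finset.sum_const, nsmul_eq_mul]
  rw [e1, e2, e3]
  have hcard : (Cs.card : ℤ) = (q : ℤ) - 1 := by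
    rw [hCs, Finset.card_image_of_injOn hInjOn]
    have : Fx = (univ : Finset F).erase 0 := by
      ext x; simp [hFx, Finset.mem_erase, and_comm]
    rw [this, Finset.card_erase_of_mem (Finset.mem_univ 0), Finset.card_univ, hq]
    have hq1 : 1 ≤ q := by
      rw [← hq]; exact Fintype.card_pos
    push_cast [hq1]
    ring
  have hsCs : ∑ W ∈ Cs, u W = ∑ c ∈ Fx, u (HcDef F i₁ i₂ c) := by
    rw [hCs, Finset.sum_image (fun a ha b hb h => hInjOn ha hb h)]
  rw [hcard, hsCs]
  ring

lemma mem_graphArr {K : Type} [Field K] [Fintype K] {V : Type} [Fintype V]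
    (G : SimpleGraph V) (W : Submodule K (V → K)) :
    W ∈ graphArr K G ↔
      (∃ i : V, W = LinearMap.ker (LinearMap.proj i : (V → K) →ₗ[K] K)) ∨
      (∃ a b : V, ∃ c : K, G.Adj a b ∧ c ≠ 0 ∧
        W = LinearMap.ker ((LinearMap.proj a : (V → K) →ₗ[K] K) - c • LinearMap.proj b)) := by
  constructor
  · intro h
    rcases Finset.mem_union.1 h with h | h
    · obtain ⟨i, _, rfl⟩ := Finset.mem_image.1 h
      exact Or.inl ⟨i, rfl⟩
    · obtain ⟨p, hp, rfl⟩ := Finset.mem_image.1 h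
      obtain ⟨hadj, hc⟩ := (Finset.mem_filter.1 hp).2
      exact Or.inr ⟨p.1, p.2.1, p.2.2, hadj, hc, rfl⟩
  · rintro (⟨i, rfl⟩ | ⟨a, b, c, hadj, hc, rfl⟩)
    · exact Finset.mem_union_left _ (Finset.mem_image.2 ⟨i, Finset.mem_univ _, rfl⟩)
    · exact Finset.mem_union_right _ (Finset.mem_image.2
        ⟨⟨a, b, c⟩, Finset.mem_filter.2 ⟨Finset.mem_univ _, hadj, hc⟩, rfl⟩)

section split
variable {ℓ : ℕ} {F : Type} [Field F] [Fintype F] {i₁ i₂ : Fin ℓ}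

lemma ker_smul_eq {M : Type} [AddCommGroup M] [Module F M] (f g : M →ₗ[F] F) (a : F)
    (ha : a ≠ 0) (h : a • f = g) : LinearMap.ker f = LinearMap.ker g := by
  rw [← h, LinearMap.ker_smul _ a ha]

lemma ker_flip (a b : Fin ℓ) (c : F) (hc : c ≠ 0) :
    LinearMap.ker ((LinearMap.proj b : (Fin ℓ → F) →ₗ[F] F) - c • LinearMap.proj a)
      = LinearMap.ker ((LinearMap.proj a : (Fin ℓ → F) →ₗ[F] F) - c⁻¹ • LinearMap.proj b) := by
  refine (ker_smul_eq _ _ (-c) (neg_ne_zero.2 hc) ?_).symm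
  apply LinearMap.ext
  intro x
  simp only [LinearMap.smul_apply, LinearMap.sub_apply, LinearMap.proj_apply,
    smul_eq_mul]
  field_simp
  ring

lemma graphArr_split (G : SimpleGraph (Fin ℓ)) (hadj : G.Adj i₁ i₂) :
    graphArr F G = graphArr F (G.deleteEdges {s(i₁, i₂)})
      ∪ (((univ : Finset F).filter (fun c => c ≠ 0)).image (HcDef F i₁ i₂)) := by
  classical
  ext W
  rw [Finset.mem_union, mem_graphArr, mem_graphArr]
  constructor
  · rintro (⟨i, rfl⟩ | ⟨a, b, c, hab, hc, rfl⟩)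
    · exact Or.inl (Or.inl ⟨i, rfl⟩)
    · by_cases hs : s(a, b) = s(i₁, i₂)
      · rcases Sym2.eq_iff.1 hs with ⟨ha, hb⟩ | ⟨ha, hb⟩
        · exact Or.inr (Finset.mem_image.2 ⟨c, by simp [hc], by rw [ha, hb]; rfl⟩)
        · refine Or.inr (Finset.mem_image.2 ⟨c⁻¹, by simp [hc], ?_⟩)
          rw [ha, hb, HcDef]
          exact (ker_flip i₁ i₂ c hc).symm
      · exact Or.inl (Or.inr ⟨a, b, c, by simp [SimpleGraph.deleteEdges_adj, hab, hs], hc, rfl⟩)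
  · rintro (h | h)
    · rcases h with ⟨i, rfl⟩ | ⟨a, b, c, hab, hc, rfl⟩
      · exact Or.inl ⟨i, rfl⟩
      · exact Or.inr ⟨a, b, c, (SimpleGraph.deleteEdges_adj).1 hab |>.1, hc, rfl⟩
    · obtain ⟨c, hcmem, rfl⟩ := Finset.mem_image.1 h
      have hc : c ≠ 0 := (Finset.mem_filter.1 hcmem).2
      exact Or.inr ⟨i₁, i₂, c, hadj, hc, rfl⟩

lemma graphArr_disjoint (G : SimpleGraph (Fin ℓ)) (hadj : G.Adj i₁ i₂) :
    Disjoint (graphArr F (G.deleteEdges {s(i₁, i₂)}))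
      (((univ : Finset F).filter (fun c => c ≠ 0)).image (HcDef F i₁ i₂)) := by
  classical
  have hne : i₁ ≠ i₂ := G.ne_of_adj hadj
  rw [Finset.disjoint_right]
  intro W hW hWB
  obtain ⟨c, hcmem, rfl⟩ := Finset.mem_image.1 hW
  have hc : c ≠ 0 := (Finset.mem_filter.1 hcmem).2
  rcases (mem_graphArr _ _).1 hWB with ⟨j, hj⟩ | ⟨a, b, c', hab, hc', hj⟩
  · by_cases hji : j = i₂
    · rw [hji] at hj
      have hx : (Pi.single i₁ 1 : Fin ℓ → F) ∈
          LinearMap.ker (LinearMap.proj i₂ : (Fin ℓ → F) →ₗ[F] F) := by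
        simp [LinearMap.mem_ker, Pi.single_apply, hne.symm]
      rw [← hj] at hx
      simp [HcDef, LinearMap.mem_ker, Pi.single_apply, hne, hne.symm] at hx
    · have hx : (Pi.single i₂ 1 : Fin ℓ → F) ∈
          LinearMap.ker (LinearMap.proj j : (Fin ℓ → F) →ₗ[F] F) := by
        simp [LinearMap.mem_ker, Pi.single_apply, Ne.symm hji]
      rw [← hj] at hx
      simp [HcDef, LinearMap.mem_ker, Pi.single_apply, hne, hc] at hx
  · have hanb : a ≠ b := ((SimpleGraph.deleteEdges_adj).1 hab).1.ne
    have hs : s(a, b) ≠ s(i₁, i₂) := by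
      have := ((SimpleGraph.deleteEdges_adj).1 hab).2
      simpa using this
    by_cases ha2 : a = i₂
    · subst ha2
      have hb1 : b ≠ i₁ := by
        intro h; exact hs (by rw [h, Sym2.eq_swap])
      have hx : (Pi.single a c' + Pi.single b 1 : Fin ℓ → F) ∈
          LinearMap.ker ((LinearMap.proj a : (Fin ℓ → F) →ₗ[F] F) - c' • LinearMap.proj b) := by
        simp [LinearMap.mem_ker, Pi.single_apply, hanb, Ne.symm hanb]
      rw [← hj] at hx
      simp [HcDef, LinearMap.mem_ker, Pi.single_apply, hne, Ne.symm hb1, hanb,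
        Ne.symm hanb, hc, hc'] at hx
    · by_cases hb2 : b = i₂
      · subst hb2
        have ha1 : a ≠ i₁ := by
          intro h; exact hs (by rw [h])
        have hx : (Pi.single a c' + Pi.single b 1 : Fin ℓ → F) ∈
            LinearMap.ker ((LinearMap.proj a : (Fin ℓ → F) →ₗ[F] F) - c' • LinearMap.proj b) := by
          simp [LinearMap.mem_ker, Pi.single_apply, hanb, Ne.symm hanb]
        rw [← hj] at hx
        simp [HcDef, LinearMap.mem_ker, Pi.single_apply, hne, Ne.symm ha1, hanb,
          Ne.symm hanb, hc, hc'] at hx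
      · have hx : (Pi.single i₂ 1 : Fin ℓ → F) ∈
            LinearMap.ker ((LinearMap.proj a : (Fin ℓ → F) →ₗ[F] F) - c' • LinearMap.proj b) := by
          simp [LinearMap.mem_ker, Pi.single_apply, Ne.symm ha2, Ne.symm hb2]
        rw [← hj] at hx
        simp [HcDef, LinearMap.mem_ker, Pi.single_apply, hne, hc] at hx

section core
variable {ℓ : ℕ} {F : Type} [Field F] [Fintype F] {i₁ i₂ : Fin ℓ}

lemma comap_jker (hne : i₁ ≠ i₂) {c : F} (f : (Fin ℓ → F) →ₗ[F] F)
    (g : ({i : Fin ℓ // i ≠ i₂} → F) →ₗ[F] F) (α : F) (hα : α ≠ 0)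
    (h : α • (f.comp (jmap F hne c)) = g) :
    Submodule.comap (jmap F hne c) (LinearMap.ker f) = LinearMap.ker g := by
  rw [← LinearMap.ker_comp]
  exact ker_smul_eq _ _ α hα h

lemma image_comap (G : SimpleGraph (Fin ℓ)) (hadj : G.Adj i₁ i₂) (c : F) (hc : c ≠ 0) :
    (graphArr F (G.deleteEdges {s(i₁, i₂)})).image
        (fun W => Submodule.comap (jmap F (G.ne_of_adj hadj) c) W)
      = graphArr F (SimpleGraph.fromRel fun a b : {i : Fin ℓ // i ≠ i₂} =>
          G.Adj ↑a ↑b ∨ ((a : Fin ℓ) = i₁ ∧ G.Adj i₂ ↑b)) := by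
  classical
  set hne := G.ne_of_adj hadj with hnedef
  ext W
  simp only [Finset.mem_image]
  constructor
  · rintro ⟨H, hH, rfl⟩
    rcases (mem_graphArr _ _).1 hH with ⟨j0, rfl⟩ | ⟨a, b, c', hab, hc', rfl⟩
    · by_cases hj0 : j0 = i₂
      · refine (mem_graphArr _ _).2 (Or.inl ⟨⟨i₁, hne⟩, ?_⟩)
        refine (comap_jker hne _ _ c hc ?_).symm.symm
        apply LinearMap.ext
        intro y
        simp only [LinearMap.smul_apply, LinearMap.comp_apply, LinearMap.proj_apply,
          jmap_apply, smul_eq_mul, dif_pos hj0]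
        field_simp
      · refine (mem_graphArr _ _).2 (Or.inl ⟨⟨j0, hj0⟩, ?_⟩)
        refine (comap_jker hne _ _ 1 one_ne_zero ?_).symm.symm
        apply LinearMap.ext
        intro y
        simp [jmap_apply, hj0]
    · have hGab : G.Adj a b := ((SimpleGraph.deleteEdges_adj).1 hab).1
      have hs : s(a, b) ≠ s(i₁, i₂) := by
        have := ((SimpleGraph.deleteEdges_adj).1 hab).2
        simpa using this
      have hanb : a ≠ b := hGab.ne
      by_cases ha2 : a = i₂
      · have hb2 : b ≠ i₂ := fun h => hanb (ha2.trans h.symm)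
        have hb1 : b ≠ i₁ := by
          intro h
          exact hs (by rw [ha2, h, Sym2.eq_swap])
        refine (mem_graphArr _ _).2 (Or.inr ⟨⟨i₁, hne⟩, ⟨b, hb2⟩, c * c', ?_, by
          simp [hc, hc'], ?_⟩)
        · rw [SimpleGraph.fromRel_adj]
          refine ⟨by simp [Subtype.ext_iff, Ne.symm hb1], Or.inl (Or.inr ⟨rfl, ?_⟩)⟩
          have := hGab
          rw [ha2] at this
          exact this
        · refine (comap_jker hne _ _ c hc ?_).symm.symm
          apply LinearMap.ext
          intro y
          simp only [LinearMap.smul_apply, LinearMap.comp_apply, LinearMap.sub_apply,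
            LinearMap.proj_apply, jmap_apply, smul_eq_mul, dif_pos ha2, dif_neg hb2]
          field_simp
      · by_cases hb2 : b = i₂
        · have ha1 : a ≠ i₁ := by
            intro h
            exact hs (by rw [h, hb2])
          refine (mem_graphArr _ _).2 (Or.inr ⟨⟨a, ha2⟩, ⟨i₁, hne⟩, c' * c⁻¹, ?_, by
            simp [hc, hc'], ?_⟩)
          · rw [SimpleGraph.fromRel_adj]
            refine ⟨by simp [Subtype.ext_iff, ha1], Or.inr (Or.inr ⟨rfl, ?_⟩)⟩
            have := hGab.symm
            rw [hb2] at this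
            exact this
          · refine (comap_jker hne _ _ 1 one_ne_zero ?_).symm.symm
            apply LinearMap.ext
            intro y
            simp only [one_smul, LinearMap.comp_apply, LinearMap.sub_apply,
              LinearMap.smul_apply, LinearMap.proj_apply, jmap_apply,
              smul_eq_mul, dif_pos hb2, dif_neg ha2]
            field_simp
        · refine (mem_graphArr _ _).2 (Or.inr ⟨⟨a, ha2⟩, ⟨b, hb2⟩, c', ?_, hc', ?_⟩)
          · rw [SimpleGraph.fromRel_adj]
            exact ⟨by simp [Subtype.ext_iff, hanb], Or.inl (Or.inl hGab)⟩
          · refine (comap_jker hne _ _ 1 one_ne_zero ?_).symm.symm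
            apply LinearMap.ext
            intro y
            simp [jmap_apply, ha2, hb2]
  · intro hW
    rcases (mem_graphArr _ _).1 hW with ⟨j0, rfl⟩ | ⟨a, b, c', hAdj, hc', rfl⟩
    · obtain ⟨jv, hjv⟩ := j0
      refine ⟨LinearMap.ker (LinearMap.proj jv : (Fin ℓ → F) →ₗ[F] F),
        (mem_graphArr _ _).2 (Or.inl ⟨jv, rfl⟩), ?_⟩
      refine comap_jker hne _ _ 1 one_ne_zero ?_
      apply LinearMap.ext
      intro y
      simp [jmap_apply, hjv]
    · rw [SimpleGraph.fromRel_adj] at hAdj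
      obtain ⟨habne, hrel⟩ := hAdj
      obtain ⟨av, ha2⟩ := a
      obtain ⟨bv, hb2⟩ := b
      have hvne : av ≠ bv := by simpa [Subtype.ext_iff] using habne
      have hmain : ∀ (hGab : G.Adj av bv), ∃ H, H ∈ graphArr F (G.deleteEdges {s(i₁, i₂)}) ∧
          Submodule.comap (jmap F hne c) H
            = LinearMap.ker ((LinearMap.proj (⟨av, ha2⟩ : {i : Fin ℓ // i ≠ i₂})
                : ({i : Fin ℓ // i ≠ i₂} → F) →ₗ[F] F)
              - c' • LinearMap.proj (⟨bv, hb2⟩ : {i : Fin ℓ // i ≠ i₂})) := by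
        intro hGab
        refine ⟨LinearMap.ker ((LinearMap.proj av : (Fin ℓ → F) →ₗ[F] F)
            - c' • LinearMap.proj bv), (mem_graphArr _ _).2 (Or.inr ⟨av, bv, c', ?_, hc', rfl⟩), ?_⟩
        · rw [SimpleGraph.deleteEdges_adj]
          refine ⟨hGab, ?_⟩
          simp only [Set.mem_singleton_iff, Sym2.eq_iff]
          rintro (⟨h1, h2⟩ | ⟨h1, h2⟩)
          · exact hb2 h2
          · exact ha2 h1
        · refine comap_jker hne _ _ 1 one_ne_zero ?_
          apply LinearMap.ext
          intro y
          simp [jmap_apply, ha2, hb2]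
      rcases hrel with (hGab | ⟨hai, hGb⟩) | (hGba | ⟨hbi, hGa⟩)
      · exact hmain hGab
      · -- av = i₁, G.Adj i₂ bv
        have haeq : (⟨av, ha2⟩ : {i : Fin ℓ // i ≠ i₂}) = ⟨i₁, hne⟩ := Subtype.ext hai
        rw [haeq]
        have hb1 : bv ≠ i₁ := by
          intro h
          exact hvne (hai.trans h.symm)
        refine ⟨LinearMap.ker ((LinearMap.proj i₂ : (Fin ℓ → F) →ₗ[F] F)
            - (c⁻¹ * c') • LinearMap.proj bv),
          (mem_graphArr _ _).2 (Or.inr ⟨i₂, bv, c⁻¹ * c', ?_, by simp [hc, hc'], rfl⟩), ?_⟩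
        · rw [SimpleGraph.deleteEdges_adj]
          refine ⟨hGb, ?_⟩
          simp only [Set.mem_singleton_iff, Sym2.eq_iff]
          rintro (⟨h1, h2⟩ | ⟨h1, h2⟩)
          · exact hne h1.symm
          · exact hb1 h2
        · refine comap_jker hne _ _ c hc ?_
          apply LinearMap.ext
          intro y
          simp only [LinearMap.smul_apply, LinearMap.comp_apply, LinearMap.sub_apply,
            LinearMap.proj_apply, jmap_apply, dif_pos rfl, smul_eq_mul, dif_neg hb2, dif_pos trivial]
          field_simp
      · exact hmain hGba.symm
      · -- bv = i₁, G.Adj i₂ av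
        have hbeq : (⟨bv, hb2⟩ : {i : Fin ℓ // i ≠ i₂}) = ⟨i₁, hne⟩ := Subtype.ext hbi
        rw [hbeq]
        have ha1 : av ≠ i₁ := by
          intro h
          exact hvne (h.trans hbi.symm)
        refine ⟨LinearMap.ker ((LinearMap.proj av : (Fin ℓ → F) →ₗ[F] F)
            - (c' * c) • LinearMap.proj i₂),
          (mem_graphArr _ _).2 (Or.inr ⟨av, i₂, c' * c, ?_, by simp [hc, hc'], rfl⟩), ?_⟩
        · rw [SimpleGraph.deleteEdges_adj]
          refine ⟨hGa.symm, ?_⟩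
          simp only [Set.mem_singleton_iff, Sym2.eq_iff]
          rintro (⟨h1, h2⟩ | ⟨h1, h2⟩)
          · exact ha1 h1
          · exact hne h2.symm
        · refine comap_jker hne _ _ 1 one_ne_zero ?_
          apply LinearMap.ext
          intro y
          simp only [one_smul, LinearMap.comp_apply, LinearMap.sub_apply,
            LinearMap.smul_apply, LinearMap.proj_apply, jmap_apply, dif_pos rfl,
            smul_eq_mul, ha2, dif_neg, dif_pos trivial, dif_neg not_false]
          field_simp

lemma core_csum (G : SimpleGraph (Fin ℓ)) (hadj : G.Adj i₁ i₂) (c : F) (hc : c ≠ 0) (t : ℤ) :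
    ∑ I ∈ (graphArr F (G.deleteEdges {s(i₁, i₂)})).powerset,
        (-1 : ℤ) ^ I.card * t ^ (Module.finrank F ↥(I.inf id ⊓ HcDef F i₁ i₂ c))
      = chi (graphArr F (SimpleGraph.fromRel fun a b : {i : Fin ℓ // i ≠ i₂} =>
          G.Adj ↑a ↑b ∨ ((a : Fin ℓ) = i₁ ∧ G.Adj i₂ ↑b))) t := by
  classical
  have hne : i₁ ≠ i₂ := G.ne_of_adj hadj
  have hrw : ∀ I : Finset (Submodule F (Fin ℓ → F)),
      Module.finrank F ↥(I.inf id ⊓ HcDef F i₁ i₂ c)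
        = Module.finrank F ↥(I.inf (fun W => Submodule.comap (jmap F hne c) W)) := by
    intro I
    rw [← comap_finset_inf, finrank_comap_eq _ (jmap_injective F hne c),
      range_jmap F hne c hc]
    rfl
  have h1 : ∑ I ∈ (graphArr F (G.deleteEdges {s(i₁, i₂)})).powerset,
      (-1 : ℤ) ^ I.card * t ^ (Module.finrank F ↥(I.inf id ⊓ HcDef F i₁ i₂ c))
      = ∑ I ∈ (graphArr F (G.deleteEdges {s(i₁, i₂)})).powerset,
        (-1 : ℤ) ^ I.card * t ^ (Module.finrank F
          ↥(I.inf (fun W => Submodule.comap (jmap F hne c) W))) := by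
    refine Finset.sum_congr rfl (fun I _ => ?_)
    rw [hrw]
  rw [h1, whitney_collapse
    (fun W : Submodule F ({i : Fin ℓ // i ≠ i₂} → F) => t ^ (Module.finrank F ↥W))
    (fun W : Submodule F (Fin ℓ → F) =>
      (Submodule.comap (jmap F hne c) W : Submodule F ({i : Fin ℓ // i ≠ i₂} → F)))
    (graphArr F (G.deleteEdges {s(i₁, i₂)})),
    image_comap G hadj c hc]
  rfl

end core

/-- q-deletion-contraction for `S_G^q`.  For an edge `e = {i₁,i₂}`
of `G`, `χ(S_G^q, t) = χ(S_{G∖e}^q, t) − (q−1)·χ(S_{G/e}^q, t)`, where `G/e` is the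
graph on `{1,…,ℓ}∖{i₂}` whose edges are the 2-element images `σ(f)` of edges `f` of
`G` under the map `σ` sending `i₂` to `i₁` and fixing everything else. -/
theorem stmt6 (ℓ : ℕ) (F : Type) [Field F] [Fintype F] (q : ℕ)
    (hq : Fintype.card F = q)
    (G : SimpleGraph (Fin ℓ)) (i₁ i₂ : Fin ℓ) (hadj : G.Adj i₁ i₂) (t : ℤ) :
    chi (graphArr F G) t
      = chi (graphArr F (G.deleteEdges {s(i₁, i₂)})) t
        - ((q : ℤ) - 1) *
          chi (graphArr F (SimpleGraph.fromRel
            fun a b : {i : Fin ℓ // i ≠ i₂} =>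
              G.Adj ↑a ↑b ∨ ((a : Fin ℓ) = i₁ ∧ G.Adj i₂ ↑b))) t := by
  classical
  have hne : i₁ ≠ i₂ := G.ne_of_adj hadj
  have hsplit := graphArr_split (F := F) G hadj
  have hdisj := graphArr_disjoint (F := F) G hadj
  set B := graphArr F (G.deleteEdges {s(i₁, i₂)}) with hBdef
  set Fx := (univ : Finset F).filter (fun c : F => c ≠ 0) with hFxdef
  set Cs := Fx.image (HcDef F i₁ i₂) with hCsdef
  have hq1 : 1 ≤ q := by rw [← hq]; exact Fintype.card_pos
  have hFxcard : (Fx.card : ℤ) = (q : ℤ) - 1 := by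
    have : Fx = (univ : Finset F).erase 0 := by
      ext x; simp [hFxdef, Finset.mem_erase, and_comm]
    rw [this, Finset.card_erase_of_mem (Finset.mem_univ 0), Finset.card_univ, hq]
    push_cast [hq1]
    ring
  have lhs_eq : chi (graphArr F G) t
      = ∑ I ∈ B.powerset, ∑ J ∈ Cs.powerset,
          (-1 : ℤ) ^ (I ∪ J).card * t ^ (Module.finrank F ↥((I ∪ J).inf id)) := by
    rw [hsplit]
    unfold chi
    exact sum_powerset_union_disj hdisj _
  have hstep : ∀ I ∈ B.powerset,
      ∑ J ∈ Cs.powerset,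
          (-1 : ℤ) ^ (I ∪ J).card * t ^ (Module.finrank F ↥((I ∪ J).inf id))
        = (-1) ^ I.card * t ^ (Module.finrank F ↥(I.inf id))
          - (-1) ^ I.card * ∑ c ∈ Fx, t ^ (Module.finrank F ↥(I.inf id ⊓ HcDef F i₁ i₂ c))
          + (-1) ^ I.card * (((q : ℤ) - 2)
              * t ^ (Module.finrank F ↥(I.inf id ⊓ KDef F i₁ i₂))) := by
    intro I hI
    have hIB : I ⊆ B := Finset.mem_powerset.1 hI
    have hpt : ∀ J ∈ Cs.powerset,
        (-1 : ℤ) ^ (I ∪ J).card * t ^ (Module.finrank F ↥((I ∪ J).inf id))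
          = (-1) ^ I.card * ((-1) ^ J.card
              * t ^ (Module.finrank F ↥(I.inf id ⊓ J.inf id))) := by
      intro J hJ
      have hJC : J ⊆ Cs := Finset.mem_powerset.1 hJ
      have hIJ : Disjoint I J := Finset.disjoint_of_subset_left hIB
        (Finset.disjoint_of_subset_right hJC hdisj)
      rw [Finset.card_union_of_disjoint hIJ, Finset.inf_union, pow_add]
      ring
    rw [Finset.sum_congr rfl hpt, ← Finset.mul_sum,
      csum hq hne (fun W => t ^ (Module.finrank F ↥(I.inf id ⊓ W)))]
    rw [inf_top_eq]
    ring
  rw [lhs_eq, Finset.sum_congr rfl hstep, Finset.sum_add_distrib, Finset.sum_sub_distrib]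
  have h3 : ∑ I ∈ B.powerset,
      (-1 : ℤ) ^ I.card * (((q : ℤ) - 2)
        * t ^ (Module.finrank F ↥(I.inf id ⊓ KDef F i₁ i₂))) = 0 := by
    have hcomm : ∀ I ∈ B.powerset,
        (-1 : ℤ) ^ I.card * (((q : ℤ) - 2)
          * t ^ (Module.finrank F ↥(I.inf id ⊓ KDef F i₁ i₂)))
        = ((q : ℤ) - 2) * ((-1) ^ I.card
          * t ^ (Module.finrank F ↥(KDef F i₁ i₂ ⊓ I.inf id))) := by
      intro I _
      rw [inf_comm]
      ring
    rw [Finset.sum_congr rfl hcomm, ← Finset.mul_sum,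
      sum_pow_inf_zero (fun W : Submodule F (Fin ℓ → F) => t ^ (Module.finrank F ↥W)) id B (KDef F i₁ i₂)
        (LinearMap.ker (LinearMap.proj i₁ : (Fin ℓ → F) →ₗ[F] F))
        ((mem_graphArr _ _).2 (Or.inl ⟨i₁, rfl⟩))
        (by
          rw [id_eq]
          exact inf_eq_left.2 inf_le_left),
      mul_zero]
  have h2 : ∑ I ∈ B.powerset,
      (-1 : ℤ) ^ I.card * ∑ c ∈ Fx, t ^ (Module.finrank F ↥(I.inf id ⊓ HcDef F i₁ i₂ c))
      = ((q : ℤ) - 1) * chi (graphArr F (SimpleGraph.fromRel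
          fun a b : {i : Fin ℓ // i ≠ i₂} =>
            G.Adj ↑a ↑b ∨ ((a : Fin ℓ) = i₁ ∧ G.Adj i₂ ↑b))) t := by
    have : ∀ I ∈ B.powerset, (-1 : ℤ) ^ I.card
        * ∑ c ∈ Fx, t ^ (Module.finrank F ↥(I.inf id ⊓ HcDef F i₁ i₂ c))
        = ∑ c ∈ Fx, (-1 : ℤ) ^ I.card
            * t ^ (Module.finrank F ↥(I.inf id ⊓ HcDef F i₁ i₂ c)) := by
      intro I _
      rw [Finset.mul_sum]
    rw [Finset.sum_congr rfl this, Finset.sum_comm]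
    have hc_eq : ∀ c ∈ Fx, ∑ I ∈ B.powerset, (-1 : ℤ) ^ I.card
        * t ^ (Module.finrank F ↥(I.inf id ⊓ HcDef F i₁ i₂ c))
        = chi (graphArr F (SimpleGraph.fromRel
            fun a b : {i : Fin ℓ // i ≠ i₂} =>
              G.Adj ↑a ↑b ∨ ((a : Fin ℓ) = i₁ ∧ G.Adj i₂ ↑b))) t := by
      intro c hcmem
      exact core_csum G hadj c ((Finset.mem_filter.1 hcmem).2) t
    rw [Finset.sum_congr rfl hc_eq, Finset.sum_const, nsmul_eq_mul, hFxcard]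
  rw [h2, h3, add_zero]
  have : ∑ I ∈ B.powerset, (-1 : ℤ) ^ I.card * t ^ (Module.finrank F ↥(I.inf id))
      = chi B t := rfl
  rw [this]
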